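/- Let A ∈ 𝔪 = (⊕_α 𝔪_α) ⊕ 𝔠, with components A_α ∈ 𝔪_α and A_𝔠 ∈ 𝔠. Then ∫_G (φ(g) A φ(g)⁻¹) ⊗ (φ(g) A φ(g)⁻¹) dμ(g) = Σ_{α=1}^m (‖A_α‖_F² / d_α) · K_α + A_𝔠 ⊗ A_𝔠, where ⊗ denotes the Kronecker product of N×N matrices. -/

import Mathlib

open MeasureTheory Matrix
open scoped Kronecker

attribute [local instance] Matrix.normedAddCommGroup Matrix.normedSpace

namespace Stmt2Aux

noncomputable instance instCENormMat {m n : Type*} [Fintype m] [Fintype n] :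
    ContinuousENorm (Matrix m n ℂ) :=
  SeminormedAddGroup.toContinuousENorm


variable {N : ℕ}

/-- The ℂ-linear functional `X ↦ trace (X * B)`. -/
noncomputable def trF (B : Matrix (Fin N) (Fin N) ℂ) : Matrix (Fin N) (Fin N) ℂ →ₗ[ℂ] ℂ where
  toFun X := Matrix.trace (X * B)
  map_add' X Y := by simp [add_mul]
  map_smul' r X := by simp [smul_mul_assoc]

@[simp] lemma trF_apply (B X : Matrix (Fin N) (Fin N) ℂ) :
    trF B X = Matrix.trace (X * B) := rfl

lemma trace_eq_zero_of_mem_span {s : Set (Matrix (Fin N) (Fin N) ℂ)}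
    {B X : Matrix (Fin N) (Fin N) ℂ}
    (h : ∀ Y ∈ s, Matrix.trace (Y * B) = 0) (hX : X ∈ Submodule.span ℂ s) :
    Matrix.trace (X * B) = 0 := by
  have hle : Submodule.span ℂ s ≤ LinearMap.ker (trF B) :=
    Submodule.span_le.2 (fun Y hY => by simpa using h Y hY)
  simpa using hle hX

/-- Projection onto the span of a trace-orthonormal family. -/
noncomputable def proj {ι : Type*} [Fintype ι] (E : ι → Matrix (Fin N) (Fin N) ℂ) :
    Matrix (Fin N) (Fin N) ℂ →ₗ[ℂ] Matrix (Fin N) (Fin N) ℂ :=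
  ∑ i, (trF (E i)).smulRight (-(E i))

lemma proj_apply {ι : Type*} [Fintype ι] (E : ι → Matrix (Fin N) (Fin N) ℂ)
    (X : Matrix (Fin N) (Fin N) ℂ) :
    proj E X = ∑ i, (-(Matrix.trace (X * E i))) • E i := by
  simp [proj, LinearMap.sum_apply, neg_smul, smul_neg]

lemma coeff_of_sum {ι : Type*} [Fintype ι] [DecidableEq ι]
    {E : ι → Matrix (Fin N) (Fin N) ℂ}
    (horth : ∀ i j, Matrix.trace (E i * E j) = if i = j then (-1 : ℂ) else 0)
    (x : ι → ℂ) (j : ι) :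
    -(Matrix.trace ((∑ i, x i • E i) * E j)) = x j := by
  rw [Finset.sum_mul]
  simp only [smul_mul_assoc, Matrix.trace_sum, trace_smul, horth, smul_eq_mul]
  rw [Finset.sum_eq_single j]
  · simp
  · intro b _ hb; simp [hb]
  · intro hj; exact absurd (Finset.mem_univ j) hj

lemma sq_of_sum {ι : Type*} [Fintype ι] [DecidableEq ι]
    {E : ι → Matrix (Fin N) (Fin N) ℂ}
    (horth : ∀ i j, Matrix.trace (E i * E j) = if i = j then (-1 : ℂ) else 0)
    (x : ι → ℂ) :
    -(Matrix.trace ((∑ i, x i • E i) * (∑ i, x i • E i))) = ∑ i, (x i) ^ 2 := by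
  simp only [Finset.sum_mul, Matrix.mul_sum, smul_mul_assoc, mul_smul_comm,
    Matrix.trace_sum, Matrix.trace_smul, smul_eq_mul, horth, mul_ite, mul_neg_one, mul_zero,
    mul_neg, Finset.sum_ite_eq, Finset.mem_univ, if_true]
  rw [← Finset.sum_neg_distrib]
  exact Finset.sum_congr rfl (fun i _ => by ring)

lemma proj_eq_self_of_mem {ι : Type*} [Fintype ι] [DecidableEq ι]
    {E : ι → Matrix (Fin N) (Fin N) ℂ}
    (horth : ∀ i j, Matrix.trace (E i * E j) = if i = j then (-1 : ℂ) else 0)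
    {X : Matrix (Fin N) (Fin N) ℂ} (hX : X ∈ Submodule.span ℂ (Set.range E)) :
    proj E X = X := by
  have hgen : ∀ i, proj E (E i) = E i := by
    intro i
    rw [proj_apply]
    have : ∀ j, (-(Matrix.trace (E i * E j))) • E j = (if j = i then (1:ℂ) else 0) • E j := by
      intro j; rw [horth]; by_cases h : i = j <;> simp [h, eq_comm]
    rw [Finset.sum_congr rfl (fun j _ => this j)]
    simp [Finset.sum_ite_eq]
  have hle : Submodule.span ℂ (Set.range E) ≤ LinearMap.ker (proj E - LinearMap.id) := by
    rw [Submodule.span_le]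
    rintro _ ⟨i, rfl⟩
    simp [LinearMap.mem_ker, LinearMap.sub_apply, hgen i, sub_eq_zero]
  have := hle hX
  simpa [LinearMap.mem_ker, LinearMap.sub_apply, sub_eq_zero] using this

lemma kron_expand {ι κ : Type*} [Fintype ι] [Fintype κ]
    (x : ι → ℂ) (y : κ → ℂ) (E : ι → Matrix (Fin N) (Fin N) ℂ)
    (E' : κ → Matrix (Fin N) (Fin N) ℂ) :
    (∑ i, x i • E i) ⊗ₖ (∑ j, y j • E' j)
      = ∑ i, ∑ j, (x i * y j) • (E i ⊗ₖ E' j) := by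
  calc (∑ i, x i • E i) ⊗ₖ (∑ j, y j • E' j)
      = Matrix.kroneckerBilinear (R := ℂ) (∑ i, x i • E i) (∑ j, y j • E' j) := rfl
    _ = ∑ i, ∑ j, (x i * y j) • (E i ⊗ₖ E' j) := by
        rw [map_sum]
        have : ∀ j : κ, (Matrix.kroneckerBilinear (R := ℂ) (∑ i, x i • E i)) (y j • E' j)
            = ∑ i, (x i * y j) • (E i ⊗ₖ E' j) := by
          intro j
          rw [_root_.map_smul, map_sum, LinearMap.sum_apply, Finset.smul_sum]
          refine Finset.sum_congr rfl fun i _ => ?_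
          rw [_root_.map_smul, LinearMap.smul_apply, smul_smul, mul_comm]
          rfl
        rw [Finset.sum_congr rfl (fun j _ => this j), Finset.sum_comm]



variable {G : Type} [Group G] {N : ℕ} (φ : G →* Matrix.unitaryGroup (Fin N) ℂ)

/-- Conjugation by `φ g` as a `ℂ`-linear map on matrices. -/
noncomputable def conjA (g : G) : Matrix (Fin N) (Fin N) ℂ →ₗ[ℂ] Matrix (Fin N) (Fin N) ℂ :=
  (LinearMap.mulRight ℂ ((φ g⁻¹ : Matrix (Fin N) (Fin N) ℂ))).comp
    (LinearMap.mulLeft ℂ ((φ g : Matrix (Fin N) (Fin N) ℂ)))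

lemma conjA_apply (g : G) (X : Matrix (Fin N) (Fin N) ℂ) :
    conjA φ g X = (φ g : Matrix (Fin N) (Fin N) ℂ) * X * (φ g⁻¹ : Matrix (Fin N) (Fin N) ℂ) :=
  rfl

lemma coe_mul (g h : G) :
    ((φ g : Matrix (Fin N) (Fin N) ℂ)) * (φ h : Matrix (Fin N) (Fin N) ℂ)
      = (φ (g * h) : Matrix (Fin N) (Fin N) ℂ) := by
  rw [_root_.map_mul]; simp

lemma coe_inv_mul (g : G) :
    ((φ g⁻¹ : Matrix (Fin N) (Fin N) ℂ)) * (φ g : Matrix (Fin N) (Fin N) ℂ) = 1 := by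
  rw [coe_mul, show g⁻¹ * g = 1 by group, _root_.map_one]; simp

lemma coe_mul_inv (g : G) :
    ((φ g : Matrix (Fin N) (Fin N) ℂ)) * (φ g⁻¹ : Matrix (Fin N) (Fin N) ℂ) = 1 := by
  rw [coe_mul, show g * g⁻¹ = 1 by group, _root_.map_one]; simp

lemma conjA_comp (g h : G) (X : Matrix (Fin N) (Fin N) ℂ) :
    conjA φ g (conjA φ h X) = conjA φ (g * h) X := by
  simp only [conjA_apply]
  rw [show (g * h)⁻¹ = h⁻¹ * g⁻¹ from mul_inv_rev g h, ← coe_mul φ g h, ← coe_mul φ h⁻¹ g⁻¹]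
  noncomm_ring

lemma conjA_mul (g : G) (X Y : Matrix (Fin N) (Fin N) ℂ) :
    conjA φ g X * conjA φ g Y = conjA φ g (X * Y) := by
  simp only [conjA_apply]
  have := coe_inv_mul φ g
  calc (φ g : Matrix (Fin N) (Fin N) ℂ) * X * (φ g⁻¹ : Matrix (Fin N) (Fin N) ℂ)
        * ((φ g : Matrix (Fin N) (Fin N) ℂ) * Y * (φ g⁻¹ : Matrix (Fin N) (Fin N) ℂ))
      = (φ g : Matrix (Fin N) (Fin N) ℂ) * X
        * ((φ g⁻¹ : Matrix (Fin N) (Fin N) ℂ) * (φ g : Matrix (Fin N) (Fin N) ℂ))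
        * (Y * (φ g⁻¹ : Matrix (Fin N) (Fin N) ℂ)) := by noncomm_ring
    _ = (φ g : Matrix (Fin N) (Fin N) ℂ) * (X * Y) * (φ g⁻¹ : Matrix (Fin N) (Fin N) ℂ) := by
        rw [this]; noncomm_ring

lemma trace_conjA (g : G) (X : Matrix (Fin N) (Fin N) ℂ) :
    Matrix.trace (conjA φ g X) = Matrix.trace X := by
  rw [conjA_apply, Matrix.trace_mul_cycle, coe_inv_mul φ g, Matrix.one_mul]

lemma trace_conjA_mul (g : G) (X Y : Matrix (Fin N) (Fin N) ℂ) :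
    Matrix.trace (conjA φ g X * Y) = Matrix.trace (X * conjA φ g⁻¹ Y) := by
  simp only [conjA_apply, inv_inv]
  rw [show (φ g : Matrix (Fin N) (Fin N) ℂ) * X * (φ g⁻¹ : Matrix (Fin N) (Fin N) ℂ) * Y
      = (φ g : Matrix (Fin N) (Fin N) ℂ) * (X * ((φ g⁻¹ : Matrix (Fin N) (Fin N) ℂ) * Y)) by
    noncomm_ring]
  rw [Matrix.trace_mul_comm]
  rw [show X * ((φ g⁻¹ : Matrix (Fin N) (Fin N) ℂ) * Y) * (φ g : Matrix (Fin N) (Fin N) ℂ)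
      = X * ((φ g⁻¹ : Matrix (Fin N) (Fin N) ℂ) * Y * (φ g : Matrix (Fin N) (Fin N) ℂ)) by
    noncomm_ring]

lemma conjA_one_side (g : G) (X : Matrix (Fin N) (Fin N) ℂ) (h : conjA φ g X = X) :
    (φ g : Matrix (Fin N) (Fin N) ℂ) * X = X * (φ g : Matrix (Fin N) (Fin N) ℂ) := by
  have h2 := congrArg (fun Z => Z * (φ g : Matrix (Fin N) (Fin N) ℂ)) h
  simp only [conjA_apply] at h2
  rw [Matrix.mul_assoc ((φ g : Matrix (Fin N) (Fin N) ℂ) * X), coe_inv_mul φ g,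
    Matrix.mul_one] at h2
  exact h2

/-- invariance of a complex span of a family under conjugation, given invariance
of the real span. -/
lemma conjA_mem_spanC (g : G) {ι : Type*} (E : ι → Matrix (Fin N) (Fin N) ℂ)
    (hinv : ∀ X ∈ Submodule.span ℝ (Set.range E),
      (φ g : Matrix (Fin N) (Fin N) ℂ) * X * (φ g⁻¹ : Matrix (Fin N) (Fin N) ℂ) ∈
        Submodule.span ℝ (Set.range E))
    {X : Matrix (Fin N) (Fin N) ℂ} (hX : X ∈ Submodule.span ℂ (Set.range E)) :
    conjA φ g X ∈ Submodule.span ℂ (Set.range E) := by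
  have hmap : Submodule.map (conjA φ g) (Submodule.span ℂ (Set.range E))
      ≤ Submodule.span ℂ (Set.range E) := by
    rw [Submodule.map_span, Submodule.span_le]
    rintro _ ⟨_, ⟨i, rfl⟩, rfl⟩
    have h1 : E i ∈ Submodule.span ℝ (Set.range E) :=
      Submodule.subset_span ⟨i, rfl⟩
    have h2 := hinv (E i) h1
    rw [← conjA_apply φ g] at h2
    exact Submodule.span_le_restrictScalars ℝ ℂ (Set.range E) h2
  exact hmap ⟨X, hX, rfl⟩


section TopDef

variable {G : Type} [Group G] [MeasurableSpace G] {N : ℕ}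
  (μ : Measure G) (φ : G →* Matrix.unitaryGroup (Fin N) ℂ)

/-- The averaged intertwining operator. -/
noncomputable def Top (A : Matrix (Fin N) (Fin N) ℂ)
    (P : Matrix (Fin N) (Fin N) ℂ →ₗ[ℂ] Matrix (Fin N) (Fin N) ℂ)
    (hint : ∀ X, Integrable
      (fun g => (-(Matrix.trace (A * conjA φ g⁻¹ X))) • P (conjA φ g A)) μ) :
    Matrix (Fin N) (Fin N) ℂ →ₗ[ℂ] Matrix (Fin N) (Fin N) ℂ where
  toFun X := ∫ g, (-(Matrix.trace (A * conjA φ g⁻¹ X))) • P (conjA φ g A) ∂μ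
  map_add' X Y := by
    rw [← integral_add (hint X) (hint Y)]
    refine integral_congr_ae (Filter.Eventually.of_forall fun g => ?_)
    simp only [map_add, mul_add, Matrix.trace_add, neg_add, add_smul]
  map_smul' r X := by
    rw [RingHom.id_apply, ← integral_smul]
    refine integral_congr_ae (Filter.Eventually.of_forall fun g => ?_)
    simp only [_root_.map_smul, mul_smul_comm, Matrix.trace_smul, smul_smul, smul_eq_mul, mul_neg]

lemma Top_apply (A : Matrix (Fin N) (Fin N) ℂ)
    (P : Matrix (Fin N) (Fin N) ℂ →ₗ[ℂ] Matrix (Fin N) (Fin N) ℂ)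
    (hint : ∀ X, Integrable
      (fun g => (-(Matrix.trace (A * conjA φ g⁻¹ X))) • P (conjA φ g A)) μ)
    (X : Matrix (Fin N) (Fin N) ℂ) :
    Top μ φ A P hint X = ∫ g, (-(Matrix.trace (A * conjA φ g⁻¹ X))) • P (conjA φ g A) ∂μ := rfl

end TopDef

end Stmt2Aux

open Stmt2Aux

/-- second moment for a compact, reductive DLA. With
`𝔪 = (⊕_α 𝔪_α) ⊕ 𝔠` spanned by a Frobenius-orthonormal skew-Hermitian family
(`F α j` spanning the simple ideals `𝔪_α` and `C l` spanning the center `𝔠`),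
invariant under conjugation by the representation, with each complexified ideal
irreducible, containing no nonzero `G`-commuting matrix, and pairwise non-isomorphic:
for `A ∈ 𝔪`,
`∫_G (φ(g) A φ(g)⁻¹)^{⊗2} dμ = ∑_α (‖A_α‖_F²/d_α) • K_α + A_𝔠 ⊗ A_𝔠`. -/
theorem stmt_2
    {G : Type} [Group G] [TopologicalSpace G] [IsTopologicalGroup G] [CompactSpace G]
    [MeasurableSpace G] [BorelSpace G]
    (μ : Measure G) [μ.IsHaarMeasure] [IsProbabilityMeasure μ]
    {N m c : ℕ} (hN : 1 ≤ N) (dα : Fin m → ℕ) (hdα : ∀ α, 1 ≤ dα α)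
    (φ : G →* Matrix.unitaryGroup (Fin N) ℂ)
    (hcont : Continuous fun g => (φ g : Matrix (Fin N) (Fin N) ℂ))
    (F : (α : Fin m) → Fin (dα α) → Matrix (Fin N) (Fin N) ℂ)
    (C : Fin c → Matrix (Fin N) (Fin N) ℂ)
    (hFskew : ∀ α j, (F α j)ᴴ = -(F α j))
    (hCskew : ∀ l, (C l)ᴴ = -(C l))
    -- Frobenius orthonormality of the whole family `{F α j} ∪ {C l}`
    (horthF : ∀ α j k, Matrix.trace (F α j * F α k) = if j = k then (-1 : ℂ) else 0)
    (horthF' : ∀ α β, α ≠ β → ∀ j k, Matrix.trace (F α j * F β k) = 0)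
    (horthFC : ∀ α j l, Matrix.trace (F α j * C l) = 0)
    (horthC : ∀ l l', Matrix.trace (C l * C l') = if l = l' then (-1 : ℂ) else 0)
    -- the total span 𝔪, the ideals 𝔪_α and the center 𝔠
    (mm : Submodule ℝ (Matrix (Fin N) (Fin N) ℂ))
    (hmm : mm = Submodule.span ℝ
      (Set.range (fun p : (Σ α : Fin m, Fin (dα α)) => F p.1 p.2) ∪ Set.range C))
    -- (i) 𝔪 is a Lie algebra, each 𝔪_α an ideal, 𝔠 central
    (hLie : ∀ X ∈ mm, ∀ Y ∈ mm, ⁅X, Y⁆ ∈ mm)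
    (hIdeal : ∀ α, ∀ X ∈ Submodule.span ℝ (Set.range (F α)), ∀ Y ∈ mm,
      ⁅X, Y⁆ ∈ Submodule.span ℝ (Set.range (F α)))
    (hCentral : ∀ X ∈ Submodule.span ℝ (Set.range C), ∀ Y ∈ mm, ⁅X, Y⁆ = 0)
    -- (ii) conjugation invariance; the center commutes with the representation
    (hConjF : ∀ α (g : G), ∀ X ∈ Submodule.span ℝ (Set.range (F α)),
      (φ g : Matrix (Fin N) (Fin N) ℂ) * X * (φ g⁻¹ : Matrix (Fin N) (Fin N) ℂ) ∈
        Submodule.span ℝ (Set.range (F α)))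
    (hConjC : ∀ g : G, ∀ X ∈ Submodule.span ℝ (Set.range C),
      (φ g : Matrix (Fin N) (Fin N) ℂ) * X * (φ g⁻¹ : Matrix (Fin N) (Fin N) ℂ) ∈
        Submodule.span ℝ (Set.range C))
    (hCommC : ∀ g : G, ∀ X ∈ Submodule.span ℝ (Set.range C),
      (φ g : Matrix (Fin N) (Fin N) ℂ) * X = X * (φ g : Matrix (Fin N) (Fin N) ℂ))
    -- (iii) each complexified ideal is irreducible and has no nonzero `G`-commuting element
    (hirr : ∀ α, ∀ W : Submodule ℂ (Matrix (Fin N) (Fin N) ℂ),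
      W ≤ Submodule.span ℂ (Set.range (F α)) →
      (∀ g : G, ∀ X ∈ W,
        (φ g : Matrix (Fin N) (Fin N) ℂ) * X * (φ g⁻¹ : Matrix (Fin N) (Fin N) ℂ) ∈ W) →
      W = ⊥ ∨ W = Submodule.span ℂ (Set.range (F α)))
    (hnocomm : ∀ α, ∀ X ∈ Submodule.span ℂ (Set.range (F α)),
      (∀ g : G, (φ g : Matrix (Fin N) (Fin N) ℂ) * X = X * (φ g : Matrix (Fin N) (Fin N) ℂ)) →
      X = 0)
    -- (iv) the complexified ideals are pairwise non-isomorphic as `G`-representations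
    (hnoniso : ∀ α β, α ≠ β →
      ∀ T : Matrix (Fin N) (Fin N) ℂ →ₗ[ℂ] Matrix (Fin N) (Fin N) ℂ,
      (∀ X ∈ Submodule.span ℂ (Set.range (F α)), T X ∈ Submodule.span ℂ (Set.range (F β))) →
      (∀ g : G, ∀ X ∈ Submodule.span ℂ (Set.range (F α)),
        T ((φ g : Matrix (Fin N) (Fin N) ℂ) * X * (φ g⁻¹ : Matrix (Fin N) (Fin N) ℂ))
          = (φ g : Matrix (Fin N) (Fin N) ℂ) * T X * (φ g⁻¹ : Matrix (Fin N) (Fin N) ℂ)) →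
      ∀ X ∈ Submodule.span ℂ (Set.range (F α)), T X = 0)
    (A : Matrix (Fin N) (Fin N) ℂ) (hA : A ∈ mm) :
    (∫ g, ((φ g : Matrix (Fin N) (Fin N) ℂ) * A * (φ g⁻¹ : Matrix (Fin N) (Fin N) ℂ)) ⊗ₖ
        ((φ g : Matrix (Fin N) (Fin N) ℂ) * A * (φ g⁻¹ : Matrix (Fin N) (Fin N) ℂ)) ∂μ)
      = (∑ α, ((∑ j, (Matrix.trace (A * F α j)) ^ 2) / (dα α : ℂ)) •
            ∑ j, F α j ⊗ₖ F α j)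
        + (∑ l, (-(Matrix.trace (A * C l))) • C l) ⊗ₖ
            (∑ l, (-(Matrix.trace (A * C l))) • C l) := by
  classical
  -- ambient abbreviations
  set EE : ((Σ α : Fin m, Fin (dα α)) ⊕ Fin c) → Matrix (Fin N) (Fin N) ℂ :=
    Sum.elim (fun p : (Σ α : Fin m, Fin (dα α)) => F p.1 p.2) C with hEEdef
  -- orthonormality of the combined family
  have horthEE : ∀ i j, Matrix.trace (EE i * EE j) = if i = j then (-1 : ℂ) else 0 := by
    rintro (⟨α, j⟩ | l) (⟨β, k⟩ | l')
    · by_cases hab : α = β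
      · subst hab
        rw [hEEdef]; simp only [Sum.elim_inl]
        rw [horthF α j k]
        by_cases hjk : j = k <;> simp [hjk]
      · rw [hEEdef]; simp only [Sum.elim_inl]
        rw [horthF' α β hab j k]
        simp [Sigma.mk.inj_iff, hab]
    · rw [hEEdef]; simp only [Sum.elim_inl, Sum.elim_inr]
      rw [horthFC α j l']; simp
    · rw [hEEdef]; simp only [Sum.elim_inl, Sum.elim_inr]
      rw [Matrix.trace_mul_comm, horthFC β k l]; simp
    · rw [hEEdef]; simp only [Sum.elim_inr]
      rw [horthC l l']
      by_cases h : l = l' <;> simp [h]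
  have hrangeEE : Set.range EE
      = Set.range (fun p : (Σ α : Fin m, Fin (dα α)) => F p.1 p.2) ∪ Set.range C := by
    rw [hEEdef]; exact Set.Sum.elim_range _ _
  have hmmEE : Submodule.span ℝ (Set.range EE) = mm := by rw [hrangeEE, hmm]
  have hmmC : ∀ X ∈ mm, X ∈ Submodule.span ℂ (Set.range EE) := by
    intro X hX
    rw [← hmmEE] at hX
    exact Submodule.span_le_restrictScalars ℝ ℂ _ hX
  -- the complexified ideals
  have hWle : ∀ α, Submodule.span ℂ (Set.range (F α)) ≤ Submodule.span ℂ (Set.range EE) := by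
    intro α
    rw [Submodule.span_le]
    rintro _ ⟨j, rfl⟩
    exact Submodule.subset_span ⟨Sum.inl ⟨α, j⟩, rfl⟩
  -- cross-trace vanishing
  have htrFF' : ∀ (α β : Fin m), α ≠ β → ∀ X ∈ Submodule.span ℂ (Set.range (F β)),
      ∀ k, Matrix.trace (X * F α k) = 0 := by
    intro α β hne X hX k
    refine trace_eq_zero_of_mem_span ?_ hX
    rintro _ ⟨j, rfl⟩
    exact horthF' β α (fun h => hne h.symm) j k
  have htrCF : ∀ X ∈ Submodule.span ℂ (Set.range C), ∀ (α : Fin m) k,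
      Matrix.trace (X * F α k) = 0 := by
    intro X hX α k
    refine trace_eq_zero_of_mem_span ?_ hX
    rintro _ ⟨l, rfl⟩
    rw [Matrix.trace_mul_comm]
    exact horthFC α k l
  -- conjugation invariance of the complexified ideals
  have hconjW : ∀ (α : Fin m) (g : G), ∀ X ∈ Submodule.span ℂ (Set.range (F α)),
      conjA φ g X ∈ Submodule.span ℂ (Set.range (F α)) :=
    fun α g X hX => conjA_mem_spanC φ g (F α) (hConjF α g) hX
  have hmmInv : ∀ g : G, ∀ X ∈ Submodule.span ℝ (Set.range EE),
      (φ g : Matrix (Fin N) (Fin N) ℂ) * X * (φ g⁻¹ : Matrix (Fin N) (Fin N) ℂ) ∈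
        Submodule.span ℝ (Set.range EE) := by
    intro g X hX
    rw [hmmEE] at hX ⊢
    rw [← conjA_apply φ g]
    have hle : mm ≤ Submodule.comap ((conjA φ g).restrictScalars ℝ) mm := by
      conv_lhs => rw [hmm]
      rw [Submodule.span_le]
      rintro _ (⟨⟨p, rfl⟩⟩ | ⟨l, rfl⟩)
      · have h1 : F p.1 p.2 ∈ Submodule.span ℝ (Set.range (F p.1)) :=
          Submodule.subset_span ⟨p.2, rfl⟩
        have h2 := hConjF p.1 g _ h1
        have h3 : Submodule.span ℝ (Set.range (F p.1)) ≤ mm := by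
          rw [hmm, Submodule.span_le]
          rintro _ ⟨j, rfl⟩
          exact Submodule.subset_span (Or.inl ⟨⟨p.1, j⟩, rfl⟩)
        simpa [conjA_apply] using h3 h2
      · have h1 : C l ∈ Submodule.span ℝ (Set.range C) := Submodule.subset_span ⟨l, rfl⟩
        have h2 := hConjC g _ h1
        have h3 : Submodule.span ℝ (Set.range C) ≤ mm := by
          rw [hmm, Submodule.span_le]
          rintro _ ⟨l', rfl⟩
          exact Submodule.subset_span (Or.inr ⟨l', rfl⟩)
        simpa [conjA_apply] using h3 h2
    exact hle hX
  have hconjEE : ∀ (g : G), ∀ X ∈ Submodule.span ℂ (Set.range EE),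
      conjA φ g X ∈ Submodule.span ℂ (Set.range EE) :=
    fun g X hX => conjA_mem_spanC φ g EE (hmmInv g) hX
  have hconjCfix : ∀ (g : G) (l : Fin c), conjA φ g (C l) = C l := by
    intro g l
    have h1 := hCommC g (C l) (Submodule.subset_span ⟨l, rfl⟩)
    rw [conjA_apply, h1, Matrix.mul_assoc, coe_mul_inv φ g, Matrix.mul_one]
  have hAC : A ∈ Submodule.span ℂ (Set.range EE) := hmmC A hA
  -- continuity and integrability tools
  have hcontConj : ∀ X : Matrix (Fin N) (Fin N) ℂ, Continuous fun g => conjA φ g X := by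
    intro X
    simp only [conjA_apply]
    exact (hcont.matrix_mul continuous_const).matrix_mul (hcont.comp continuous_inv)
  have hcontConjInv : ∀ X : Matrix (Fin N) (Fin N) ℂ, Continuous fun g => conjA φ g⁻¹ X :=
    fun X => (hcontConj X).comp continuous_inv
  have hintC : ∀ f : G → ℂ, Continuous f → Integrable f μ :=
    fun f hf => hf.integrable_of_hasCompactSupport (HasCompactSupport.of_compactSpace f)
  have hintM : ∀ f : G → Matrix (Fin N) (Fin N) ℂ, Continuous f → Integrable f μ :=
    fun f hf => hf.integrable_of_hasCompactSupport (HasCompactSupport.of_compactSpace f)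
  have hcontTr : ∀ B : Matrix (Fin N) (Fin N) ℂ,
      Continuous fun g => Matrix.trace (conjA φ g A * B) :=
    fun B => ((hcontConj A).matrix_mul continuous_const).matrix_trace
  have hcontTr' : ∀ X : Matrix (Fin N) (Fin N) ℂ,
      Continuous fun g => Matrix.trace (A * conjA φ g⁻¹ X) :=
    fun X => (continuous_const.matrix_mul (hcontConjInv X)).matrix_trace
  -- expansion of the conjugated matrix
  have hexp : ∀ g : G, conjA φ g A
      = (∑ p : (Σ α : Fin m, Fin (dα α)),
          (-(Matrix.trace (conjA φ g A * F p.1 p.2))) • F p.1 p.2)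
        + ∑ l, (-(Matrix.trace (A * C l))) • C l := by
    intro g
    have h1 : conjA φ g A ∈ Submodule.span ℂ (Set.range EE) := hconjEE g A hAC
    calc conjA φ g A = ∑ i, (-(Matrix.trace (conjA φ g A * EE i))) • EE i := by
          rw [← proj_apply]
          exact (proj_eq_self_of_mem horthEE h1).symm
      _ = _ := by
          rw [Fintype.sum_sum_type]
          simp only [hEEdef, Sum.elim_inl, Sum.elim_inr]
          congr 1
          refine Finset.sum_congr rfl fun l _ => ?_
          rw [trace_conjA_mul φ g A (C l), hconjCfix g⁻¹ l]
  -- the projection commutes with conjugation on the span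
  have hPcomm : ∀ (β : Fin m) (h : G), ∀ Y ∈ Submodule.span ℂ (Set.range EE),
      proj (F β) (conjA φ h Y) = conjA φ h (proj (F β) Y) := by
    intro β h
    have hker : Submodule.span ℂ (Set.range EE) ≤ LinearMap.ker
        ((proj (F β)).comp (conjA φ h) - (conjA φ h).comp (proj (F β))) := by
      rw [Submodule.span_le]
      rintro _ ⟨i, rfl⟩
      simp only [SetLike.mem_coe, LinearMap.mem_ker, LinearMap.sub_apply, LinearMap.comp_apply,
        sub_eq_zero]
      rcases i with ⟨γ, j⟩ | l
      · have hEi : EE (Sum.inl ⟨γ, j⟩) = F γ j := by rw [hEEdef]; rfl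
        rw [hEi]
        by_cases hγ : γ = β
        · subst hγ
          rw [proj_eq_self_of_mem (horthF γ) (Submodule.subset_span ⟨j, rfl⟩),
            proj_eq_self_of_mem (horthF γ) (hconjW γ h _ (Submodule.subset_span ⟨j, rfl⟩))]
        · have hz1 : proj (F β) (conjA φ h (F γ j)) = 0 := by
            rw [proj_apply]
            refine Finset.sum_eq_zero fun k _ => ?_
            rw [htrFF' β γ (fun hh => hγ hh.symm) _
              (hconjW γ h _ (Submodule.subset_span ⟨j, rfl⟩)) k]
            simp
          have hz2 : proj (F β) (F γ j) = 0 := by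
            rw [proj_apply]
            refine Finset.sum_eq_zero fun k _ => ?_
            rw [htrFF' β γ (fun hh => hγ hh.symm) _ (Submodule.subset_span ⟨j, rfl⟩) k]
            simp
          rw [hz1, hz2, map_zero]
      · have hEi : EE (Sum.inr l) = C l := by rw [hEEdef]; rfl
        rw [hEi, hconjCfix h l]
        have hz : proj (F β) (C l) = 0 := by
          rw [proj_apply]
          refine Finset.sum_eq_zero fun k _ => ?_
          rw [htrCF (C l) (Submodule.subset_span ⟨l, rfl⟩) β k]
          simp
        rw [hz, map_zero]
    intro Y hY
    have hk := hker hY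
    simpa [LinearMap.mem_ker, LinearMap.sub_apply, LinearMap.comp_apply, sub_eq_zero] using hk
  -- integrability for the averaged operator
  have hTint : ∀ (β : Fin m) (X : Matrix (Fin N) (Fin N) ℂ), Integrable
      (fun g => (-(Matrix.trace (A * conjA φ g⁻¹ X))) • proj (F β) (conjA φ g A)) μ := by
    intro β X
    refine hintM _ (Continuous.smul ((hcontTr' X).neg) ?_)
    exact (LinearMap.toContinuousLinearMap (proj (F β))).continuous.comp (hcontConj A)
  set Tm : Fin m → (Matrix (Fin N) (Fin N) ℂ →ₗ[ℂ] Matrix (Fin N) (Fin N) ℂ) :=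
    fun β => Top μ φ A (proj (F β)) (hTint β) with hTmdef
  -- coordinate form of the averaged operator
  have hTcoord : ∀ (β : Fin m) (X : Matrix (Fin N) (Fin N) ℂ), Tm β X
      = ∑ k, (∫ g, (Matrix.trace (A * conjA φ g⁻¹ X))
          * (Matrix.trace (conjA φ g A * F β k)) ∂μ) • F β k := by
    intro β X
    have h0 : Tm β X = ∫ g, (-(Matrix.trace (A * conjA φ g⁻¹ X))) • proj (F β) (conjA φ g A) ∂μ := by
      simp only [hTmdef]; rw [Top_apply]
    rw [h0]
    calc (∫ g, (-(Matrix.trace (A * conjA φ g⁻¹ X))) • proj (F β) (conjA φ g A) ∂μ)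
        = ∫ g, ∑ k, ((Matrix.trace (A * conjA φ g⁻¹ X))
            * (Matrix.trace (conjA φ g A * F β k))) • F β k ∂μ := by
          refine integral_congr_ae (Filter.Eventually.of_forall fun g => ?_)
          simp only [proj_apply, Finset.smul_sum]
          refine Finset.sum_congr rfl fun k _ => ?_
          rw [smul_smul, neg_mul_neg]
      _ = ∑ k, (∫ g, (Matrix.trace (A * conjA φ g⁻¹ X))
            * (Matrix.trace (conjA φ g A * F β k)) ∂μ) • F β k := by
          rw [integral_finset_sum]
          · exact Finset.sum_congr rfl fun k _ => integral_smul_const _ _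
          · intro k _
            exact hintM _ (((hcontTr' X).mul (hcontTr (F β k))).smul continuous_const)
  have hTmemW : ∀ (β : Fin m) (X : Matrix (Fin N) (Fin N) ℂ),
      Tm β X ∈ Submodule.span ℂ (Set.range (F β)) := by
    intro β X
    rw [hTcoord β X]
    exact Submodule.sum_mem _ fun k _ =>
      Submodule.smul_mem _ _ (Submodule.subset_span ⟨k, rfl⟩)
  -- equivariance of the averaged operator
  have hTequi : ∀ (β : Fin m) (h : G) (X : Matrix (Fin N) (Fin N) ℂ),
      Tm β (conjA φ h X) = conjA φ h (Tm β X) := by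
    intro β h X
    have h1 : ∀ g : G, conjA φ (h * g)⁻¹ (conjA φ h X) = conjA φ g⁻¹ X := by
      intro g
      rw [conjA_comp]
      congr 1
      group
    have h0 : ∀ Y : Matrix (Fin N) (Fin N) ℂ,
        Tm β Y = ∫ g, (-(Matrix.trace (A * conjA φ g⁻¹ Y))) • proj (F β) (conjA φ g A) ∂μ := by
      intro Y; simp only [hTmdef]; rw [Top_apply]
    rw [h0, h0]
    calc (∫ g, (-(Matrix.trace (A * conjA φ g⁻¹ (conjA φ h X))))
            • proj (F β) (conjA φ g A) ∂μ)
        = ∫ g, (fun g' => (-(Matrix.trace (A * conjA φ g'⁻¹ (conjA φ h X))))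
            • proj (F β) (conjA φ g' A)) (h * g) ∂μ :=
          (integral_mul_left_eq_self _ h).symm
      _ = ∫ g, (LinearMap.toContinuousLinearMap (conjA φ h))
            ((-(Matrix.trace (A * conjA φ g⁻¹ X))) • proj (F β) (conjA φ g A)) ∂μ := by
          refine integral_congr_ae (Filter.Eventually.of_forall fun g => ?_)
          show (-(Matrix.trace (A * conjA φ (h * g)⁻¹ (conjA φ h X))))
              • proj (F β) (conjA φ (h * g) A) = _
          rw [h1 g, ← conjA_comp φ h g A, hPcomm β h _ (hconjEE g A hAC)]
          simp only [LinearMap.coe_toContinuousLinearMap', _root_.map_smul]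
      _ = (LinearMap.toContinuousLinearMap (conjA φ h))
            (∫ g, (-(Matrix.trace (A * conjA φ g⁻¹ X))) • proj (F β) (conjA φ g A) ∂μ) :=
          ContinuousLinearMap.integral_comp_comm _ (hTint β X)
      _ = conjA φ h (∫ g, (-(Matrix.trace (A * conjA φ g⁻¹ X)))
            • proj (F β) (conjA φ g A) ∂μ) := by
          simp only [LinearMap.coe_toContinuousLinearMap']
  -- vanishing of first moments
  have hczero : ∀ (α : Fin m) (j : Fin (dα α)),
      (∫ g, Matrix.trace (conjA φ g A * F α j) ∂μ) = 0 := by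
    have hIbarInt : Integrable (fun g => conjA φ g A) μ := hintM _ (hcontConj A)
    set Ibar := ∫ g, conjA φ g A ∂μ with hIbarDef
    have hIbarConj : ∀ h : G, conjA φ h Ibar = Ibar := by
      intro h
      calc conjA φ h Ibar
          = (LinearMap.toContinuousLinearMap (conjA φ h)) (∫ g, conjA φ g A ∂μ) := by
            rw [hIbarDef]; simp only [LinearMap.coe_toContinuousLinearMap']
        _ = ∫ g, (LinearMap.toContinuousLinearMap (conjA φ h)) (conjA φ g A) ∂μ :=
            (ContinuousLinearMap.integral_comp_comm _ hIbarInt).symm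
        _ = ∫ g, (fun g' => conjA φ g' A) (h * g) ∂μ := by
            refine integral_congr_ae (Filter.Eventually.of_forall fun g => ?_)
            show (LinearMap.toContinuousLinearMap (conjA φ h)) (conjA φ g A) = conjA φ (h * g) A
            simp only [LinearMap.coe_toContinuousLinearMap']
            exact conjA_comp φ h g A
        _ = Ibar := by rw [integral_mul_left_eq_self (fun g' => conjA φ g' A) h, hIbarDef]
    have hIbarCoeff : ∀ B : Matrix (Fin N) (Fin N) ℂ,
        Matrix.trace (Ibar * B) = ∫ g, Matrix.trace (conjA φ g A * B) ∂μ := by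
      intro B
      calc Matrix.trace (Ibar * B) = (LinearMap.toContinuousLinearMap (trF B)) Ibar := by
            simp only [LinearMap.coe_toContinuousLinearMap', trF_apply]
        _ = ∫ g, (LinearMap.toContinuousLinearMap (trF B)) (conjA φ g A) ∂μ := by
            rw [hIbarDef]; exact (ContinuousLinearMap.integral_comp_comm _ hIbarInt).symm
        _ = ∫ g, Matrix.trace (conjA φ g A * B) ∂μ := by
            refine integral_congr_ae (Filter.Eventually.of_forall fun g => ?_)
            simp only [LinearMap.coe_toContinuousLinearMap', trF_apply]
    have hIbarMem : Ibar ∈ Submodule.span ℂ (Set.range EE) := by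
      have heq : Ibar = (∑ p : (Σ α : Fin m, Fin (dα α)),
          (∫ g, -(Matrix.trace (conjA φ g A * F p.1 p.2)) ∂μ) • F p.1 p.2)
          + ∑ l, (-(Matrix.trace (A * C l))) • C l := by
        rw [hIbarDef]
        calc ∫ g, conjA φ g A ∂μ
            = ∫ g, ((∑ p : (Σ α : Fin m, Fin (dα α)),
                (-(Matrix.trace (conjA φ g A * F p.1 p.2))) • F p.1 p.2)
                + ∑ l, (-(Matrix.trace (A * C l))) • C l) ∂μ :=
              integral_congr_ae (Filter.Eventually.of_forall hexp)
          _ = _ := by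
              rw [integral_add (integrable_finset_sum _ fun p _ =>
                  hintM _ (((hcontTr (F p.1 p.2)).neg).smul continuous_const))
                (integrable_const _)]
              congr 1
              · rw [integral_finset_sum _ fun p _ =>
                  hintM _ (((hcontTr (F p.1 p.2)).neg).smul continuous_const)]
                exact Finset.sum_congr rfl fun p _ => integral_smul_const _ _
              · simp
      rw [heq]
      refine Submodule.add_mem _ ?_ ?_
      · exact Submodule.sum_mem _ fun p _ => Submodule.smul_mem _ _
          (Submodule.subset_span ⟨Sum.inl p, by rw [hEEdef]; rfl⟩)
      · exact Submodule.sum_mem _ fun l _ => Submodule.smul_mem _ _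
          (Submodule.subset_span ⟨Sum.inr l, by rw [hEEdef]; rfl⟩)
    intro α j
    have hproj0 : proj (F α) Ibar = 0 := by
      refine hnocomm α _ ?_ ?_
      · rw [proj_apply]
        exact Submodule.sum_mem _ fun k _ => Submodule.smul_mem _ _
          (Submodule.subset_span ⟨k, rfl⟩)
      · intro g
        apply conjA_one_side
        rw [← hPcomm α g Ibar hIbarMem, hIbarConj g]
    have hcoeff := coeff_of_sum (horthF α) (fun k => -(Matrix.trace (Ibar * F α k))) j
    rw [← proj_apply, hproj0] at hcoeff
    have h5 : Matrix.trace (Ibar * F α j) = 0 := by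
      have h6 := hcoeff.symm
      simpa using h6
    rw [← hIbarCoeff]
    exact h5
  -- vanishing of mixed second moments
  have hcross : ∀ (α β : Fin m), α ≠ β → ∀ (j : Fin (dα α)) (k : Fin (dα β)),
      (∫ g, (Matrix.trace (conjA φ g A * F α j))
        * (Matrix.trace (conjA φ g A * F β k)) ∂μ) = 0 := by
    intro α β hne j k
    have hmemWα : F α j ∈ Submodule.span ℂ (Set.range (F α)) := Submodule.subset_span ⟨j, rfl⟩
    have hT0 : Tm β (F α j) = 0 := by
      refine hnoniso α β hne (Tm β) (fun X _ => hTmemW β X) (fun g X _ => ?_) (F α j) hmemWα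
      have h1 := hTequi β g X
      simpa only [conjA_apply] using h1
    have h2 := hTcoord β (F α j)
    rw [hT0] at h2
    have h3 := coeff_of_sum (horthF β)
      (fun k => ∫ g, (Matrix.trace (A * conjA φ g⁻¹ (F α j)))
        * (Matrix.trace (conjA φ g A * F β k)) ∂μ) k
    rw [← h2] at h3
    have h4 : (∫ g, (Matrix.trace (A * conjA φ g⁻¹ (F α j)))
        * (Matrix.trace (conjA φ g A * F β k)) ∂μ) = 0 := by simpa using h3.symm
    rw [← h4]
    refine integral_congr_ae (Filter.Eventually.of_forall fun g => ?_)
    beta_reduce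
    rw [trace_conjA_mul φ g A (F α j)]
  -- Schur's lemma
  have hSchur : ∀ α : Fin m, ∃ lam : ℂ, ∀ X ∈ Submodule.span ℂ (Set.range (F α)),
      Tm α X = lam • X := by
    intro α
    have hmem0 : F α ⟨0, hdα α⟩ ∈ Submodule.span ℂ (Set.range (F α)) :=
      Submodule.subset_span ⟨_, rfl⟩
    have hFne : F α ⟨0, hdα α⟩ ≠ 0 := by
      intro h0
      have h1 := horthF α ⟨0, hdα α⟩ ⟨0, hdα α⟩
      rw [h0] at h1
      simp at h1
    haveI : Nontrivial (Submodule.span ℂ (Set.range (F α))) :=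
      Submodule.nontrivial_iff_ne_bot.2 (fun hbot =>
        hFne ((Submodule.mem_bot ℂ).1 (hbot ▸ hmem0)))
    obtain ⟨ev, hev⟩ := Module.End.exists_eigenvalue
      ((Tm α).restrict (fun X _ => hTmemW α X) :
        Module.End ℂ (Submodule.span ℂ (Set.range (F α))))
    obtain ⟨v, hv⟩ := hev.exists_hasEigenvector
    refine ⟨ev, ?_⟩
    set W' : Submodule ℂ (Matrix (Fin N) (Fin N) ℂ) :=
      Submodule.span ℂ (Set.range (F α)) ⊓ LinearMap.ker (Tm α - ev • LinearMap.id) with hW'def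
    have hvmem : (v : Matrix (Fin N) (Fin N) ℂ) ∈ W' := by
      refine ⟨v.2, ?_⟩
      simp only [SetLike.mem_coe, LinearMap.mem_ker, LinearMap.sub_apply, LinearMap.smul_apply,
        LinearMap.id_apply, sub_eq_zero]
      have h1 := hv.apply_eq_smul
      have h2 := congrArg (Subtype.val) h1
      rw [LinearMap.restrict_coe_apply] at h2
      simpa using h2
    have hW'inv : ∀ g : G, ∀ X ∈ W', (φ g : Matrix (Fin N) (Fin N) ℂ) * X
        * (φ g⁻¹ : Matrix (Fin N) (Fin N) ℂ) ∈ W' := by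
      rintro g X ⟨hX1, hX2⟩
      rw [← conjA_apply φ g]
      refine ⟨hconjW α g X hX1, ?_⟩
      simp only [SetLike.mem_coe, LinearMap.mem_ker, LinearMap.sub_apply, LinearMap.smul_apply,
        LinearMap.id_apply, sub_eq_zero] at hX2 ⊢
      rw [hTequi α g X, hX2, _root_.map_smul]
    rcases hirr α W' inf_le_left hW'inv with hbot | htop
    · exfalso
      have hv0 : (v : Matrix (Fin N) (Fin N) ℂ) = 0 := by
        rw [hbot] at hvmem
        simpa using hvmem
      exact hv.2 (Submodule.coe_eq_zero.1 hv0)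
    · intro X hX
      have hXW' : X ∈ W' := by rw [htop]; exact hX
      obtain ⟨-, hker⟩ := hXW'
      simp only [SetLike.mem_coe, LinearMap.mem_ker, LinearMap.sub_apply, LinearMap.smul_apply,
        LinearMap.id_apply, sub_eq_zero] at hker
      exact hker
  choose lam hlam using hSchur
  have hsame : ∀ (α : Fin m) (j k : Fin (dα α)),
      (∫ g, (Matrix.trace (conjA φ g A * F α j))
        * (Matrix.trace (conjA φ g A * F α k)) ∂μ)
      = if j = k then lam α else 0 := by
    intro α j k
    have hmem : F α j ∈ Submodule.span ℂ (Set.range (F α)) := Submodule.subset_span ⟨j, rfl⟩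
    have h1 := hTcoord α (F α j)
    rw [hlam α (F α j) hmem] at h1
    have h2 := coeff_of_sum (horthF α)
      (fun k => ∫ g, (Matrix.trace (A * conjA φ g⁻¹ (F α j)))
        * (Matrix.trace (conjA φ g A * F α k)) ∂μ) k
    rw [← h1, smul_mul_assoc, Matrix.trace_smul, smul_eq_mul, horthF α j k] at h2
    calc (∫ g, (Matrix.trace (conjA φ g A * F α j))
          * (Matrix.trace (conjA φ g A * F α k)) ∂μ)
        = ∫ g, (Matrix.trace (A * conjA φ g⁻¹ (F α j)))
            * (Matrix.trace (conjA φ g A * F α k)) ∂μ := by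
          refine integral_congr_ae (Filter.Eventually.of_forall fun g => ?_)
          beta_reduce
          rw [trace_conjA_mul φ g A (F α j)]
      _ = if j = k then lam α else 0 := by
          rw [← h2]
          by_cases hjk : j = k <;> simp [hjk]
  have hlamval : ∀ α : Fin m, (dα α : ℂ) * lam α = ∑ j, (Matrix.trace (A * F α j)) ^ 2 := by
    intro α
    have hconst : ∀ g : G, (∑ j, (Matrix.trace (conjA φ g A * F α j)) ^ 2)
        = ∑ j, (Matrix.trace (A * F α j)) ^ 2 := by
      intro g
      have hY : proj (F α) (conjA φ g A) = conjA φ g (proj (F α) A) := hPcomm α g A hAC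
      have e1 : ∑ j, (Matrix.trace (conjA φ g A * F α j)) ^ 2
          = -(Matrix.trace (proj (F α) (conjA φ g A) * proj (F α) (conjA φ g A))) := by
        rw [proj_apply, sq_of_sum (horthF α)]
        exact Finset.sum_congr rfl fun j _ => (neg_sq _).symm
      have e2 : ∑ j, (Matrix.trace (A * F α j)) ^ 2
          = -(Matrix.trace (proj (F α) A * proj (F α) A)) := by
        rw [proj_apply, sq_of_sum (horthF α)]
        exact Finset.sum_congr rfl fun j _ => (neg_sq _).symm
      rw [e1, e2, hY, conjA_mul, trace_conjA]
    have hsum : ∑ j, (∫ g, (Matrix.trace (conjA φ g A * F α j))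
        * (Matrix.trace (conjA φ g A * F α j)) ∂μ) = (dα α : ℂ) * lam α := by
      rw [Finset.sum_congr rfl (fun j _ => hsame α j j)]
      simp [Finset.sum_const, Finset.card_univ, mul_comm]
    rw [← hsum, ← integral_finset_sum _ (f := fun j g => (Matrix.trace (conjA φ g A * F α j))
      * (Matrix.trace (conjA φ g A * F α j))) (fun j _ =>
      hintC _ ((hcontTr (F α j)).mul (hcontTr (F α j))))]
    calc (∫ g, ∑ j, (Matrix.trace (conjA φ g A * F α j))
          * (Matrix.trace (conjA φ g A * F α j)) ∂μ)
        = ∫ (_ : G), (∑ j, (Matrix.trace (A * F α j)) ^ 2 : ℂ) ∂μ := by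
          refine integral_congr_ae (Filter.Eventually.of_forall fun g => ?_)
          beta_reduce
          rw [← hconst g]
          exact Finset.sum_congr rfl fun j _ => (sq _).symm
      _ = ∑ j, (Matrix.trace (A * F α j)) ^ 2 := by simp
  -- final assembly
  have hlamdiv : ∀ α : Fin m, (∑ j, (Matrix.trace (A * F α j)) ^ 2) / (dα α : ℂ) = lam α := by
    intro α
    have hne : (dα α : ℂ) ≠ 0 := Nat.cast_ne_zero.2 (Nat.one_le_iff_ne_zero.1 (hdα α))
    rw [← hlamval α, mul_comm, mul_div_assoc, div_self hne, mul_one]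
  set dd : G → ((Σ α : Fin m, Fin (dα α)) ⊕ Fin c) → ℂ := fun g =>
    Sum.elim (fun p : (Σ α : Fin m, Fin (dα α)) => -(Matrix.trace (conjA φ g A * F p.1 p.2)))
      (fun l => -(Matrix.trace (A * C l))) with hdd
  have hcontdd : ∀ i, Continuous fun g => dd g i := by
    rintro (p | l)
    · simp only [hdd, Sum.elim_inl]
      exact (hcontTr (F p.1 p.2)).neg
    · simp only [hdd, Sum.elim_inr]
      exact continuous_const
  have hintK : ∀ f : G → Matrix (Fin N × Fin N) (Fin N × Fin N) ℂ,
      Continuous f → Integrable f μ :=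
    fun f hf => hf.integrable_of_hasCompactSupport (HasCompactSupport.of_compactSpace f)
  have hint2 : ∀ i i', Integrable (fun g => (dd g i * dd g i') • (EE i ⊗ₖ EE i')) μ :=
    fun i i' => hintK _ (((hcontdd i).mul (hcontdd i')).smul continuous_const)
  have hptwise : ∀ g : G, (conjA φ g A) ⊗ₖ (conjA φ g A)
      = ∑ i, ∑ i', (dd g i * dd g i') • (EE i ⊗ₖ EE i') := by
    intro g
    have h0 : conjA φ g A = ∑ i, dd g i • EE i := by
      rw [hexp g, Fintype.sum_sum_type]
      simp only [hdd, hEEdef, Sum.elim_inl, Sum.elim_inr]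
    calc (conjA φ g A) ⊗ₖ (conjA φ g A)
        = (∑ i, dd g i • EE i) ⊗ₖ (∑ i, dd g i • EE i) := by rw [← h0]
      _ = _ := kron_expand _ _ _ _
  have hvalFF : ∀ p q : (Σ α : Fin m, Fin (dα α)),
      (∫ g, dd g (Sum.inl p) * dd g (Sum.inl q) ∂μ)
      = ∫ g, (Matrix.trace (conjA φ g A * F p.1 p.2))
          * (Matrix.trace (conjA φ g A * F q.1 q.2)) ∂μ := by
    intro p q
    refine integral_congr_ae (Filter.Eventually.of_forall fun g => ?_)
    simp only [hdd, Sum.elim_inl]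
    ring
  have hvalFC : ∀ (p : (Σ α : Fin m, Fin (dα α))) (l : Fin c),
      (∫ g, dd g (Sum.inl p) * dd g (Sum.inr l) ∂μ) = 0 := by
    intro p l
    have he : (fun g => dd g (Sum.inl p) * dd g (Sum.inr l))
        = fun g => (Matrix.trace (conjA φ g A * F p.1 p.2)) • (Matrix.trace (A * C l)) := by
      funext g
      simp only [hdd, Sum.elim_inl, Sum.elim_inr, smul_eq_mul]
      ring
    rw [he, integral_smul_const, hczero p.1 p.2, zero_smul]
  have hvalCF : ∀ (l : Fin c) (p : (Σ α : Fin m, Fin (dα α))),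
      (∫ g, dd g (Sum.inr l) * dd g (Sum.inl p) ∂μ) = 0 := by
    intro l p
    have he : (fun g => dd g (Sum.inr l) * dd g (Sum.inl p))
        = fun g => (Matrix.trace (conjA φ g A * F p.1 p.2)) • (Matrix.trace (A * C l)) := by
      funext g
      simp only [hdd, Sum.elim_inl, Sum.elim_inr, smul_eq_mul]
      ring
    rw [he, integral_smul_const, hczero p.1 p.2, zero_smul]
  have hvalCC : ∀ l l' : Fin c, (∫ g, dd g (Sum.inr l) * dd g (Sum.inr l') ∂μ)
      = (-(Matrix.trace (A * C l))) * (-(Matrix.trace (A * C l'))) := by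
    intro l l'
    simp only [hdd, Sum.elim_inr]
    simp [integral_const]
  have hblock1 : ∀ p : (Σ α : Fin m, Fin (dα α)),
      (∑ i', (∫ g, dd g (Sum.inl p) * dd g i' ∂μ) • (EE (Sum.inl p) ⊗ₖ EE i'))
      = lam p.1 • (F p.1 p.2 ⊗ₖ F p.1 p.2) := by
    intro p
    rw [Fintype.sum_sum_type]
    have hz : (∑ l, (∫ g, dd g (Sum.inl p) * dd g (Sum.inr l) ∂μ)
        • (EE (Sum.inl p) ⊗ₖ EE (Sum.inr l))) = 0 :=
      Finset.sum_eq_zero fun l _ => by rw [hvalFC p l, zero_smul]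
    rw [hz, add_zero]
    have hq : ∀ q : (Σ α : Fin m, Fin (dα α)),
        (∫ g, dd g (Sum.inl p) * dd g (Sum.inl q) ∂μ)
        = if q = p then lam p.1 else 0 := by
      intro q
      rw [hvalFF p q]
      rcases eq_or_ne q p with rfl | hne
      · rw [hsame q.1 q.2 q.2]
        simp
      · rcases eq_or_ne p.1 q.1 with h1 | h1
        · obtain ⟨α, j⟩ := p
          obtain ⟨β, k⟩ := q
          simp only at h1
          subst h1
          rw [hsame α j k]
          have hjk : ¬(j = k) := by
            intro h
            subst h
            exact hne rfl
          rw [if_neg hjk, if_neg hne]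
        · rw [hcross p.1 q.1 h1 p.2 q.2, if_neg hne]
    calc (∑ q : (Σ α : Fin m, Fin (dα α)),
          (∫ g, dd g (Sum.inl p) * dd g (Sum.inl q) ∂μ) • (EE (Sum.inl p) ⊗ₖ EE (Sum.inl q)))
        = ∑ q : (Σ α : Fin m, Fin (dα α)),
            (if q = p then lam p.1 • (EE (Sum.inl p) ⊗ₖ EE (Sum.inl q)) else 0) := by
          refine Finset.sum_congr rfl fun q _ => ?_
          rw [hq q, ite_smul, zero_smul]
      _ = lam p.1 • (F p.1 p.2 ⊗ₖ F p.1 p.2) := by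
          rw [Finset.sum_ite_eq' Finset.univ p
            (fun q => lam p.1 • (EE (Sum.inl p) ⊗ₖ EE (Sum.inl q)))]
          simp only [Finset.mem_univ, if_true, hEEdef, Sum.elim_inl]
  have hblock2 : ∀ l : Fin c,
      (∑ i', (∫ g, dd g (Sum.inr l) * dd g i' ∂μ) • (EE (Sum.inr l) ⊗ₖ EE i'))
      = ∑ l', ((-(Matrix.trace (A * C l))) * (-(Matrix.trace (A * C l'))))
          • (C l ⊗ₖ C l') := by
    intro l
    rw [Fintype.sum_sum_type]
    have hz : (∑ q : (Σ α : Fin m, Fin (dα α)),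
        (∫ g, dd g (Sum.inr l) * dd g (Sum.inl q) ∂μ)
        • (EE (Sum.inr l) ⊗ₖ EE (Sum.inl q))) = 0 :=
      Finset.sum_eq_zero fun q _ => by rw [hvalCF l q, zero_smul]
    rw [hz, zero_add]
    refine Finset.sum_congr rfl fun l' _ => ?_
    rw [hvalCC l l']
    simp only [hEEdef, Sum.elim_inr]
  have hS1 : (∑ p : (Σ α : Fin m, Fin (dα α)), lam p.1 • (F p.1 p.2 ⊗ₖ F p.1 p.2))
      = ∑ α, ((∑ j, (Matrix.trace (A * F α j)) ^ 2) / (dα α : ℂ)) • ∑ j, F α j ⊗ₖ F α j := by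
    rw [← Finset.univ_sigma_univ, Finset.sum_sigma]
    refine Finset.sum_congr rfl fun α _ => ?_
    rw [hlamdiv α, Finset.smul_sum]
  have hS2 : (∑ l, ∑ l', ((-(Matrix.trace (A * C l))) * (-(Matrix.trace (A * C l'))))
        • (C l ⊗ₖ C l'))
      = (∑ l, (-(Matrix.trace (A * C l))) • C l) ⊗ₖ
          (∑ l, (-(Matrix.trace (A * C l))) • C l) :=
    (kron_expand (fun l => -(Matrix.trace (A * C l))) (fun l => -(Matrix.trace (A * C l))) C C).symm
  have hfinal : (∫ g, (conjA φ g A) ⊗ₖ (conjA φ g A) ∂μ)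
      = (∑ α, ((∑ j, (Matrix.trace (A * F α j)) ^ 2) / (dα α : ℂ)) • ∑ j, F α j ⊗ₖ F α j)
        + (∑ l, (-(Matrix.trace (A * C l))) • C l) ⊗ₖ
            (∑ l, (-(Matrix.trace (A * C l))) • C l) := by
    calc (∫ g, (conjA φ g A) ⊗ₖ (conjA φ g A) ∂μ)
        = ∫ g, ∑ i, ∑ i', (dd g i * dd g i') • (EE i ⊗ₖ EE i') ∂μ :=
          integral_congr_ae (Filter.Eventually.of_forall hptwise)
      _ = ∑ i, ∑ i', (∫ g, dd g i * dd g i' ∂μ) • (EE i ⊗ₖ EE i') := by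
          rw [integral_finset_sum _
            (fun i _ => integrable_finset_sum _ (fun i' _ => hint2 i i'))]
          refine Finset.sum_congr rfl fun i _ => ?_
          rw [integral_finset_sum _ (fun i' _ => hint2 i i')]
          exact Finset.sum_congr rfl fun i' _ => integral_smul_const _ _
      _ = _ := by
          rw [Fintype.sum_sum_type]
          rw [Finset.sum_congr rfl (fun p _ => hblock1 p),
            Finset.sum_congr rfl (fun l _ => hblock2 l), hS1, hS2]
  exact hfinal
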